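/- Let V be a 2-dimensional real inner product space, I an inner product, B a self-adjoint invertible positive operator, and set II = I(B·,·), III = I(B·,B·), H = tr B. Let (I_t, B_t) be a smooth family with I_0 = I, B_0 = B, each B_t self-adjoint for I_t, and II_t = I_t(B_t·,·). Then at t = 0: ⟨δI, II⟩_I = ⟨III, δII⟩_{II} − δH, where ⟨S,T⟩_g = tr(g⁻¹S g⁻¹T) for bilinear forms S,T and metric g, and δ denotes the t-derivative at 0. -/
import Mathlib


open Matrix

/-- Variation identity `⟨δI, II⟩_I = ⟨III, δII⟩_{II} − δH`, where `I_t` are metrics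
(positive symmetric matrices), `B_t` is `I_t`-self-adjoint positive with
`II_t = I_t·B_t`, `III = B₀ᵀ·I₀·B₀`, `H_t = tr B_t`, `δII = δI·B + I·δB`, `δH = tr δB`,
and `⟨S,T⟩_g = tr(g⁻¹ S g⁻¹ T)`. -/
theorem stmt_9 (I B : ℝ → Matrix (Fin 2) (Fin 2) ℝ)
    (δI δB : Matrix (Fin 2) (Fin 2) ℝ)
    (hpos : ∀ t, (I t).PosDef) (hIIpos : ∀ t, (I t * B t).PosDef)
    (hsa : ∀ t, I t * B t = (B t)ᵀ * I t)
    (hId : ∀ i j, HasDerivAt (fun t => I t i j) (δI i j) 0)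
    (hBd : ∀ i j, HasDerivAt (fun t => B t i j) (δB i j) 0) :
    Matrix.trace ((I 0)⁻¹ * δI * (I 0)⁻¹ * (I 0 * B 0))
      = Matrix.trace ((I 0 * B 0)⁻¹ * ((B 0)ᵀ * I 0 * B 0) * (I 0 * B 0)⁻¹
            * (δI * B 0 + I 0 * δB))
        - Matrix.trace δB := by
  have hIdet : IsUnit (I 0).det := isUnit_iff_ne_zero.mpr (hpos 0).det_pos.ne'
  have hIIdet : IsUnit (I 0 * B 0).det := isUnit_iff_ne_zero.mpr (hIIpos 0).det_pos.ne'
  have hBdet : IsUnit (B 0).det := by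
    have h := hIIdet
    rw [Matrix.det_mul] at h
    exact isUnit_of_mul_isUnit_right h
  have h2 : (B 0)ᵀ * I 0 = I 0 * B 0 := (hsa 0).symm
  have key : (I 0 * B 0)⁻¹ * ((B 0)ᵀ * I 0 * B 0) * (I 0 * B 0)⁻¹ = (I 0)⁻¹ := by
    rw [Matrix.mul_inv_rev, h2]
    simp [Matrix.mul_assoc, Matrix.nonsing_inv_mul_cancel_left _ _ hIdet,
      Matrix.nonsing_inv_mul_cancel_left _ _ hBdet,
      Matrix.mul_nonsing_inv_cancel_left _ _ hBdet]
  rw [key, mul_add, Matrix.trace_add, Matrix.nonsing_inv_mul_cancel_left _ _ hIdet]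
  have lhs : (I 0)⁻¹ * δI * (I 0)⁻¹ * (I 0 * B 0) = (I 0)⁻¹ * (δI * B 0) := by
    simp [Matrix.mul_assoc, Matrix.nonsing_inv_mul_cancel_left _ _ hIdet]
  rw [lhs]
  ring
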